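/- Let N ≥ 0 be an integer, let ℓ_0, …, ℓ_N be positive integers, let a be a real number, and define x_{-1} = a, x_0 = 1, x_{j+1} = x_{j-1} − ℓ_j x_j for 0 ≤ j ≤ N; assume x_j > 0 for 0 ≤ j ≤ N and x_{N+1} = 0. Define α_0 = 1, α_1 = −ℓ_0, α_{j+1} = α_{j-1} − ℓ_j α_j for 1 ≤ j ≤ N, and β_0 = 0, β_1 = 1, β_{j+1} = β_{j-1} − ℓ_j β_j for 1 ≤ j ≤ N. Then: if N is even, Σ_{j=0}^N ℓ_j x_j α_j = a and Σ_{j=0}^N ℓ_j x_j β_j = 0; if N is odd, Σ_{j=0}^N ℓ_j x_j α_j = 0 and Σ_{j=0}^N ℓ_j x_j β_j = 1. -/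

import Mathlib

/-- **Corollary 2.9 (cor:mirror2).** With the weight expansion `x` of `a`
(shifted: `x 0 = x₋₁ = a`, `x (j+1) = x_j`) and the coefficient sequences
`α, β` of `[ℓ_0; …, ℓ_N]`: if `N` is even then `Σ ℓ_j x_j α_j = a` and
`Σ ℓ_j x_j β_j = 0`; if `N` is odd then `Σ ℓ_j x_j α_j = 0` and
`Σ ℓ_j x_j β_j = 1`. -/


lemma stmt_5_aux (N : ℕ) (ℓ : ℕ → ℕ) (x c : ℕ → ℝ) (v : ℝ)
    (hxrec : ∀ j ≤ N, x (j + 2) = x j - (ℓ j : ℝ) * x (j + 1))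
    (hc0 : c 1 = v - (ℓ 0 : ℝ) * c 0)
    (hcrec : ∀ j, 1 ≤ j → j ≤ N → c (j + 1) = c (j - 1) - (ℓ j : ℝ) * c j)
    (hxend : x (N + 2) = 0) :
    ∑ j ∈ Finset.range (N + 1), (ℓ j : ℝ) * x (j + 1) * c j
      = x 1 * v - (∑ j ∈ Finset.range (N + 1), (-1:ℝ)^j) * (x 1 * v - x 0 * c 0) := by
  set c' : ℕ → ℝ := fun j => Nat.rec v (fun k _ => c k) j with hc'
  have hc'0 : c' 0 = v := rfl
  have hc's : ∀ j, c' (j + 1) = c j := fun j => rfl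
  -- unified recursion for c
  have hcall : ∀ j ≤ N, c (j + 1) = c' j - (ℓ j : ℝ) * c j := by
    intro j hj
    cases j with
    | zero => simpa [hc'0] using hc0
    | succ k => simpa using hcrec (k + 1) (Nat.succ_le_succ (Nat.zero_le k)) hj
  -- Wronskian
  have hW : ∀ j ≤ N + 1, x (j + 1) * c' j - x j * c j
      = (-1:ℝ)^j * (x 1 * v - x 0 * c 0) := by
    intro j hj
    induction j with
    | zero => simp [hc'0]
    | succ k ih =>
      have hk : k ≤ N := Nat.lt_succ_iff.mp hj
      have ihk := ih (Nat.le_succ_of_le hk)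
      rw [hc's, hxrec k hk, hcall k hk, pow_succ]
      ring_nf
      ring_nf at ihk
      linarith
  -- partial sums
  have hS : ∀ n ≤ N + 1, ∑ j ∈ Finset.range n, (ℓ j : ℝ) * x (j + 1) * c j
      = x 1 * v - x (n + 1) * c' n
        - (∑ j ∈ Finset.range n, (-1:ℝ)^j) * (x 1 * v - x 0 * c 0) := by
    intro n hn
    induction n with
    | zero => simp [hc'0]
    | succ k ih =>
      have hk : k ≤ N := Nat.lt_succ_iff.mp hn
      have ihk := ih (Nat.le_succ_of_le hk)
      rw [Finset.sum_range_succ, Finset.sum_range_succ, ihk]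
      have hWk := hW k (Nat.le_succ_of_le hk)
      have hx := hxrec k hk
      have hcc := hcall k hk
      have hx' : x (k + 1 + 1) = x k - (ℓ k : ℝ) * x (k + 1) := hx
      rw [hx']
      linarith [hWk]
  have := hS (N + 1) le_rfl
  rw [this, hxend]
  ring

theorem stmt_5 (N : ℕ) (ℓ : ℕ → ℕ) (hℓ : ∀ j ≤ N, 0 < ℓ j)
    (a : ℝ) (x : ℕ → ℝ) (α β : ℕ → ℤ)
    (hx0 : x 0 = a) (hx1 : x 1 = 1)
    (hxrec : ∀ j ≤ N, x (j + 2) = x j - (ℓ j : ℝ) * x (j + 1))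
    (hxpos : ∀ j ≤ N, 0 < x (j + 1))
    (hxend : x (N + 2) = 0)
    (hα0 : α 0 = 1) (hα1 : α 1 = -(ℓ 0 : ℤ))
    (hαrec : ∀ j, 1 ≤ j → j ≤ N → α (j + 1) = α (j - 1) - (ℓ j : ℤ) * α j)
    (hβ0 : β 0 = 0) (hβ1 : β 1 = 1)
    (hβrec : ∀ j, 1 ≤ j → j ≤ N → β (j + 1) = β (j - 1) - (ℓ j : ℤ) * β j) :
    (Even N →
      (∑ j ∈ Finset.range (N + 1), (ℓ j : ℝ) * x (j + 1) * (α j : ℝ)) = a ∧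
      (∑ j ∈ Finset.range (N + 1), (ℓ j : ℝ) * x (j + 1) * (β j : ℝ)) = 0) ∧
    (Odd N →
      (∑ j ∈ Finset.range (N + 1), (ℓ j : ℝ) * x (j + 1) * (α j : ℝ)) = 0 ∧
      (∑ j ∈ Finset.range (N + 1), (ℓ j : ℝ) * x (j + 1) * (β j : ℝ)) = 1) := by
  have hα' : ∀ j, 1 ≤ j → j ≤ N →
      ((α (j+1) : ℝ)) = (α (j-1) : ℝ) - (ℓ j : ℝ) * (α j : ℝ) := by
    intro j h1 h2; exact_mod_cast congrArg (Int.cast : ℤ → ℝ) (hαrec j h1 h2)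
  have hβ' : ∀ j, 1 ≤ j → j ≤ N →
      ((β (j+1) : ℝ)) = (β (j-1) : ℝ) - (ℓ j : ℝ) * (β j : ℝ) := by
    intro j h1 h2; exact_mod_cast congrArg (Int.cast : ℤ → ℝ) (hβrec j h1 h2)
  have hα0' : ((α 0 : ℤ) : ℝ) = 1 := by exact_mod_cast congrArg (Int.cast : ℤ → ℝ) hα0
  have hα1' : ((α 1 : ℤ) : ℝ) = 0 - (ℓ 0 : ℝ) * (α 0 : ℝ) := by
    rw [hα0]; push_cast [hα1]; ring
  have hβ0' : ((β 0 : ℤ) : ℝ) = 0 := by exact_mod_cast congrArg (Int.cast : ℤ → ℝ) hβ0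
  have hβ1' : ((β 1 : ℤ) : ℝ) = 1 - (ℓ 0 : ℝ) * (β 0 : ℝ) := by
    rw [hβ0]; push_cast [hβ1]; ring
  have hA := stmt_5_aux N ℓ x (fun j => (α j : ℝ)) 0 hxrec hα1' hα' hxend
  have hB := stmt_5_aux N ℓ x (fun j => (β j : ℝ)) 1 hxrec hβ1' hβ' hxend
  simp only [hα0', hβ0', hx0, hx1] at hA hB
  have hgeom : ∑ j ∈ Finset.range (N + 1), (-1:ℝ)^j
      = if Even (N + 1) then 0 else 1 := neg_one_geom_sum
  constructor
  · intro hN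
    have h1 : ¬ Even (N + 1) := by simp [Nat.even_add_one, hN]
    rw [hgeom, if_neg h1] at hA hB
    constructor
    · rw [hA]; ring
    · rw [hB]; ring
  · intro hN
    have h1 : Even (N + 1) := Nat.even_add_one.mpr (Nat.not_even_iff_odd.mpr hN)
    rw [hgeom, if_pos h1] at hA hB
    constructor
    · rw [hA]; ring
    · rw [hB]; ring
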